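/- The function P₁(x) = [(x+1)^8 − 1]/[x(x+1)^7] is strictly decreasing on (0, 1/2], mapping (0,1/2] onto [6305/2187, 8). -/

import Mathlib

open Set

noncomputable def P₁ (x : ℝ) : ℝ := ((x + 1) ^ 8 - 1) / (x * (x + 1) ^ 7)

noncomputable def g (t : ℝ) : ℝ := ∑ i ∈ Finset.range 8, t ^ i

lemma g_cont : Continuous g := by
  unfold g; continuity

lemma g_mono {s t : ℝ} (hs : 0 ≤ s) (hst : s < t) : g s < g t := by
  unfold g
  apply Finset.sum_lt_sum
  · intro i _
    exact pow_le_pow_left₀ hs hst.le i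
  · exact ⟨1, by simp, by simpa using hst⟩

lemma key {x : ℝ} (hx : 0 < x) : P₁ x = g (x + 1)⁻¹ := by
  have h1 : x + 1 ≠ 0 := by linarith
  have h0 : x ≠ 0 := ne_of_gt hx
  unfold P₁ g
  simp [Finset.sum_range_succ]
  field_simp
  ring

lemma g_two_thirds : g (2/3) = 6305 / 2187 := by
  unfold g
  simp [Finset.sum_range_succ]
  norm_num

lemma g_one : g 1 = 8 := by
  unfold g
  simp [Finset.sum_range_succ]

theorem P1_strictAnti :
    StrictAntiOn P₁ (Ioc 0 (1 / 2)) ∧ P₁ '' Ioc 0 (1 / 2) = Ico (6305 / 2187) 8 := by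
  have hanti : StrictAntiOn P₁ (Ioc 0 (1 / 2)) := by
    intro a ha b hb hab
    rw [key ha.1, key hb.1]
    apply g_mono
    · have := hb.1; positivity
    · apply inv_strictAnti₀ <;> linarith [ha.1]
  refine ⟨hanti, ?_⟩
  ext y
  simp only [mem_image, mem_Ico, mem_Ioc]
  constructor
  · rintro ⟨x, ⟨hx0, hx2⟩, rfl⟩
    constructor
    · rcases eq_or_lt_of_le hx2 with h | h
      · rw [h, key (by norm_num : (0:ℝ) < 1/2),
          show ((1:ℝ)/2 + 1)⁻¹ = 2/3 by norm_num, g_two_thirds]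
      · have := hanti ⟨hx0, hx2⟩ ⟨by norm_num, le_refl _⟩ h
        rw [key (by norm_num : (0:ℝ) < 1/2)] at this
        have h23 : ((1:ℝ)/2 + 1)⁻¹ = 2/3 := by norm_num
        rw [h23, g_two_thirds] at this
        linarith
    · rw [key hx0, ← g_one]
      apply g_mono (by positivity)
      rw [inv_lt_one_iff₀]
      right; linarith
  · rintro ⟨hy1, hy2⟩
    -- IVT for g on [2/3, 1]
    have hcont : ContinuousOn g (Icc (2/3) 1) := g_cont.continuousOn
    have hiv := intermediate_value_Icc (by norm_num : (2:ℝ)/3 ≤ 1) hcont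
    have hy : y ∈ Icc (g (2/3)) (g 1) := by
      rw [g_two_thirds, g_one]; exact ⟨hy1, hy2.le⟩
    obtain ⟨t, ht, hgt⟩ := hiv hy
    have ht1 : t < 1 := by
      rcases lt_or_eq_of_le ht.2 with h | h
      · exact h
      · exfalso; rw [h, g_one] at hgt; linarith
    have ht0 : 0 < t := by linarith [ht.1]
    refine ⟨1/t - 1, ⟨?_, ?_⟩, ?_⟩
    · have : 1 < 1/t := by
        rw [lt_div_iff₀ ht0]; linarith
      linarith
    · have : 1/t ≤ 3/2 := by
        rw [div_le_iff₀ ht0]; linarith [ht.1]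
      linarith
    · have hx0 : 0 < 1/t - 1 := by
        have : 1 < 1/t := by rw [lt_div_iff₀ ht0]; linarith
        linarith
      rw [key hx0]
      have : (1/t - 1 + 1)⁻¹ = t := by
        field_simp
        ring
      rw [this, hgt]
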